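/- arXiv:2105.02910 — 2 statements merged into one kernel-verified Lean document; each statement's English description precedes it below -/
import Mathlib

section
/- Let G be a 3-edge-connected graph with DFS tree T rooted at r, and let u ≠ r be a vertex with back-edge set B(u). Then for two back-edges e, e' ∈ B(u): the set {(u,p(u)), e, e'} is a 3-edge cut of G if and only if B(u) = {e, e'}. -/
variable {V E : Type}

/-- Reachability in the multigraph with edge-endpoint map `ends`,
avoiding (i.e. after deleting) the edges in `S`. -/
def Reach (ends : E → V × V) (S : Set E) : V → V → Prop :=
  Relation.ReflTransGen (fun a b => ∃ e, e ∉ S ∧ (ends e = (a, b) ∨ ends e = (b, a)))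

/-- The multigraph is connected. -/
def Connected (ends : E → V × V) : Prop := ∀ u v : V, Reach ends ∅ u v

/-- `u` and `v` are `k`-edge-connected: no set of at most `k - 1` edges separates them. -/
def KConn (ends : E → V × V) (k : ℕ) (u v : V) : Prop :=
  ∀ S : Finset E, S.card ≤ k - 1 → Reach ends (↑S) u v

/-- The multigraph is `k`-edge-connected: no edge cut of size less than `k`. -/
def GraphKConn (ends : E → V × V) (k : ℕ) : Prop :=
  ∀ S : Finset E, S.card < k → ∀ u v : V, Reach ends (↑S) u v

/-- `S` is an edge cut: removing it disconnects the graph. -/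
def IsCutSet (ends : E → V × V) (S : Set E) : Prop :=
  ∃ u v : V, ¬ Reach ends S u v

/-- A (candidate) DFS tree on the multigraph `ends : E → V × V`: a root, a parent
function, a choice of a tree edge for each non-root vertex, and a preorder numbering. -/
structure DFSTree (V E : Type) where
  ends : E → V × V
  root : V
  parent : V → V
  treeEdge : V → E
  pre : V → ℕ

namespace DFSTree

variable (t : DFSTree V E)

/-- `t.Anc a b` : `a` is an ancestor of `b` (every vertex is an ancestor of itself). -/
def Anc (a b : V) : Prop :=
  Relation.ReflTransGen (fun x y => x ≠ t.root ∧ y = t.parent x) b a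

/-- `a` is a proper ancestor of `b`. -/
def ProperAnc (a b : V) : Prop := t.Anc a b ∧ a ≠ b

def IsTreeEdge (e : E) : Prop := ∃ v, v ≠ t.root ∧ e = t.treeEdge v

/-- The set `B(v)`: back-edges `(x, y)` with `x` a descendant of `v` and `y` a
proper ancestor of `v`. -/
def B (v : V) : Set E :=
  {e | ¬ t.IsTreeEdge e ∧ t.Anc v (t.ends e).1 ∧ t.ProperAnc (t.ends e).2 v}

/-- `m` is the nearest common ancestor of the set `S` of vertices. -/
def IsNCA (S : Set V) (m : V) : Prop :=
  (∀ x ∈ S, t.Anc m x) ∧ ∀ m' : V, (∀ x ∈ S, t.Anc m' x) → t.Anc m' m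

/-- `m = M(v)`: the nearest common ancestor of all lower ends of back-edges in `B(v)`. -/
def IsM (v m : V) : Prop := t.IsNCA {x | ∃ e ∈ t.B v, (t.ends e).1 = x} m

/-- `h = high(v)`: the highest (in preorder) upper end of a back-edge in `B(v)`. -/
def IsHigh (v h : V) : Prop :=
  (∃ e ∈ t.B v, (t.ends e).2 = h) ∧ ∀ e ∈ t.B v, t.pre (t.ends e).2 ≤ t.pre h

/-- `l = low(v)`: the lowest (in preorder) upper end of a back-edge in `B(v)`. -/
def IsLow (v l : V) : Prop :=
  (∃ e ∈ t.B v, (t.ends e).2 = l) ∧ ∀ e ∈ t.B v, t.pre l ≤ t.pre (t.ends e).2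

/-- `v` and `w` have the same `M`-value. -/
def SameM (v w : V) : Prop := ∃ m, t.IsM v m ∧ t.IsM w m

/-- `n = nextM(v)`: the greatest vertex smaller than `v` with the same `M`-value. -/
def IsNextM (v n : V) : Prop :=
  t.pre n < t.pre v ∧ t.SameM v n ∧
    ∀ z, t.pre z < t.pre v → t.SameM v z → t.pre z ≤ t.pre n

/-- `l = lastM(v)`: the smallest vertex with the same `M`-value as `v`. -/
def IsLastM (v l : V) : Prop :=
  t.SameM v l ∧ ∀ z, t.SameM v z → t.pre l ≤ t.pre z

/-- `t` really is a DFS spanning tree of the connected multigraph `ends`. -/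
structure IsDFS : Prop where
  conn : Connected t.ends
  parent_root : t.parent t.root = t.root
  tree_ends : ∀ v, v ≠ t.root → t.ends (t.treeEdge v) = (v, t.parent v)
  treeEdge_inj : ∀ v w, v ≠ t.root → w ≠ t.root → t.treeEdge v = t.treeEdge w → v = w
  back : ∀ e, ¬ t.IsTreeEdge e → t.Anc (t.ends e).2 (t.ends e).1
  pre_inj : Function.Injective t.pre
  pre_mono : ∀ a b, t.Anc a b → t.pre a ≤ t.pre b
  pre_interval : ∀ a b : V,
    t.pre a ≤ t.pre b → t.pre b < t.pre a + {x | t.Anc a x}.ncard → t.Anc a b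

end DFSTree

section Aux

variable (t : DFSTree V E)

lemma anc_trans {a b c : V} (h1 : t.Anc a b) (h2 : t.Anc b c) : t.Anc a c :=
  Relation.ReflTransGen.trans h2 h1

lemma anc_antisymm (ht : t.IsDFS) {a b : V} (h1 : t.Anc a b) (h2 : t.Anc b a) : a = b :=
  ht.pre_inj (le_antisymm (ht.pre_mono _ _ h1) (ht.pre_mono _ _ h2))

lemma anc_root {a : V} (h : t.Anc a t.root) : a = t.root := by
  rcases Relation.ReflTransGen.cases_head h with h1 | ⟨c, ⟨hr, _⟩, _⟩
  · exact h1.symm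
  · exact absurd rfl hr

lemma anc_parent {a b : V} (h : t.Anc a b) (hne : a ≠ b) : t.Anc a (t.parent b) := by
  rcases Relation.ReflTransGen.cases_head h with h1 | ⟨c, ⟨hr, hc⟩, htl⟩
  · exact absurd h1.symm hne
  · rwa [hc] at htl

lemma anc_total {a c : V} (ha : t.Anc a c) : ∀ b, t.Anc b c → t.Anc a b ∨ t.Anc b a := by
  induction ha using Relation.ReflTransGen.head_induction_on with
  | refl => intro b hb; exact Or.inr hb
  | @head x y hstep htail ih =>
    intro b hb
    rcases Relation.ReflTransGen.cases_head hb with rfl | ⟨c', hs, htl⟩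
    · exact Or.inl (Relation.ReflTransGen.head hstep htail)
    · obtain ⟨-, rfl⟩ := hs
      obtain ⟨-, rfl⟩ := hstep
      exact ih b htl

lemma root_anc (ht : t.IsDFS) (v : V) : t.Anc t.root v := by
  have h := ht.conn t.root v
  induction h with
  | refl => exact Relation.ReflTransGen.refl
  | tail hr hstep ih =>
    rename_i b c
    obtain ⟨f, -, hf⟩ := hstep
    by_cases htf : t.IsTreeEdge f
    · obtain ⟨w, hw, rfl⟩ := htf
      have hends := ht.tree_ends w hw
      rcases hf with h1 | h1 <;> rw [hends] at h1 <;>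
        obtain ⟨rfl, rfl⟩ := Prod.mk.injEq .. ▸ h1
      · exact anc_parent t ih (Ne.symm hw)
      · exact anc_trans t ih (Relation.ReflTransGen.single ⟨hw, rfl⟩)
    · have hback := ht.back f htf
      rcases hf with h1 | h1
      · have hcb : t.Anc c b := by rw [h1] at hback; exact hback
        rcases anc_total t ih c hcb with h2 | h2
        · exact h2
        · rw [anc_root t h2]; exact Relation.ReflTransGen.refl
      · have hbc : t.Anc b c := by rw [h1] at hback; exact hback
        exact anc_trans t ih hbc

lemma reach_symm {ends : E → V × V} {S : Set E} {a b : V} (h : Reach ends S a b) :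
    Reach ends S b a :=
  haveI : Std.Symm (fun a b => ∃ e, e ∉ S ∧ (ends e = (a, b) ∨ ends e = (b, a))) :=
    ⟨fun _ _ ⟨f, h1, h2⟩ => ⟨f, h1, h2.symm⟩⟩
  Relation.ReflTransGen.symmetric.symm _ _ h

end Aux

/-- In a 3-edge-connected graph, for `u ≠ r` and two back-edges `e, e' ∈ B(u)`,
the set `{(u, p(u)), e, e'}` is a 3-edge cut iff `B(u) = {e, e'}`. -/
theorem one_tree_edge_two_back_edges_cut (t : DFSTree V E) (ht : t.IsDFS)
    (h3 : GraphKConn t.ends 3) (u : V) (hu : u ≠ t.root)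
    (e e' : E) (he : e ∈ t.B u) (he' : e' ∈ t.B u) (hne : e ≠ e') :
    IsCutSet t.ends {t.treeEdge u, e, e'} ↔ t.B u = {e, e'} := by
  set S : Set E := {t.treeEdge u, e, e'} with hS
  have heS : e ∈ S := by simp [hS]
  have he'S : e' ∈ S := by simp [hS]
  have treeEdge_notin : ∀ x, x ≠ t.root → x ≠ u → t.treeEdge x ∉ S := by
    intro x hxr hxu hmem
    rcases hmem with h1 | h1 | h1
    · exact hxu (ht.treeEdge_inj x u hxr hu h1)
    · exact he.1 ⟨x, hxr, h1.symm⟩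
    · exact he'.1 ⟨x, hxr, h1.symm⟩
  have reachU : ∀ x, t.Anc u x → Reach t.ends S x u := by
    intro x hx
    induction hx using Relation.ReflTransGen.head_induction_on with
    | refl => exact Relation.ReflTransGen.refl
    | @head a c hstep htail ih =>
      by_cases hau : a = u
      · subst hau; exact Relation.ReflTransGen.refl
      · obtain ⟨har, rfl⟩ := hstep
        exact Relation.ReflTransGen.head
          ⟨t.treeEdge a, treeEdge_notin a har hau, Or.inl (ht.tree_ends a har)⟩ ih
  have reachRoot : ∀ x, ¬ t.Anc u x → Reach t.ends S x t.root := by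
    intro x
    have h := root_anc t ht x
    induction h using Relation.ReflTransGen.head_induction_on with
    | refl => intro _; exact Relation.ReflTransGen.refl
    | @head a c hstep htail ih =>
      intro hnx
      obtain ⟨har, rfl⟩ := hstep
      have hpar : ¬ t.Anc u (t.parent a) := fun hc =>
        hnx (anc_trans t hc (Relation.ReflTransGen.single ⟨har, rfl⟩))
      have hau : a ≠ u := fun h => hnx (by subst h; exact Relation.ReflTransGen.refl)
      exact Relation.ReflTransGen.head
        ⟨t.treeEdge a, treeEdge_notin a har hau, Or.inl (ht.tree_ends a har)⟩ (ih hpar)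
  constructor
  · intro hcut
    by_contra hBne
    have hsub : ({e, e'} : Set E) ⊆ t.B u := by rintro x (rfl | rfl) <;> assumption
    have hnsub : ¬ t.B u ⊆ {e, e'} := fun h => hBne (Set.Subset.antisymm h hsub)
    obtain ⟨f, hfB, hfne⟩ := Set.not_subset.mp hnsub
    obtain ⟨hfnt, hux, hyu, hyne⟩ := hfB
    have hfS : f ∉ S := by
      intro hmem
      rcases hmem with h1 | h1 | h1
      · exact hfnt ⟨u, hu, h1⟩
      · exact hfne (by simp [h1])
      · exact hfne (by simp [h1])
    have hnay : ¬ t.Anc u (t.ends f).2 := fun hc =>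
      hyne (anc_antisymm t ht hyu hc)
    have huroot : Reach t.ends S u t.root := by
      refine (reach_symm (reachU _ hux)).trans ?_
      exact Relation.ReflTransGen.head ⟨f, hfS, Or.inl rfl⟩ (reachRoot _ hnay)
    obtain ⟨v, w, hvw⟩ := hcut
    apply hvw
    have toRoot : ∀ z, Reach t.ends S z t.root := by
      intro z
      by_cases hz : t.Anc u z
      · exact (reachU z hz).trans huroot
      · exact reachRoot z hz
    exact (toRoot v).trans (reach_symm (toRoot w))
  · intro hB
    refine ⟨u, t.root, fun hre => ?_⟩
    have key : ∀ a b, Reach t.ends S a b → t.Anc u a → t.Anc u b := by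
      intro a b h
      induction h with
      | refl => exact id
      | tail hr hstep ih =>
        rename_i b' c
        intro ha
        have hb := ih ha
        obtain ⟨f, hfS, hf⟩ := hstep
        by_cases htf : t.IsTreeEdge f
        · obtain ⟨w, hwr, rfl⟩ := htf
          have hwu : w ≠ u := fun hh => hfS (by subst hh; simp [hS])
          have hends := ht.tree_ends w hwr
          rcases hf with h1 | h1 <;> rw [hends] at h1 <;>
            obtain ⟨rfl, rfl⟩ := Prod.mk.injEq .. ▸ h1
          · exact anc_parent t hb (Ne.symm hwu)
          · exact anc_trans t hb (Relation.ReflTransGen.single ⟨hwr, rfl⟩)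
        · have hback := ht.back f htf
          rcases hf with h1 | h1
          · have hcb : t.Anc c b' := by rw [h1] at hback; exact hback
            rcases anc_total t hb c hcb with h2 | h2
            · exact h2
            · by_cases hcu : c = u
              · subst hcu; exact Relation.ReflTransGen.refl
              · have hfBu : f ∈ t.B u := ⟨htf, by rw [h1]; exact hb, by rw [h1]; exact ⟨h2, hcu⟩⟩
                rw [hB] at hfBu
                rcases hfBu with rfl | rfl
                · exact absurd heS hfS
                · exact absurd he'S hfS
          · have hbc : t.Anc b' c := by rw [h1] at hback; exact hback
            exact anc_trans t hb hbc
    have : t.Anc u t.root := key u t.root hre Relation.ReflTransGen.refl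
    exact hu (anc_antisymm t ht this (root_anc t ht u))
end

section
/- Let G be a 3-edge-connected graph with DFS tree T. For a vertex u, let V(u) be the set of ancestors v of u such that B(v) = B(u) ⊔ {e} for some back-edge e. Then for distinct vertices u ≠ u', V(u) ∩ V(u') = ∅. -/
variable {V E : Type}

namespace DFSTree

variable {t : DFSTree V E}

lemma anc_refl (a : V) : t.Anc a a := Relation.ReflTransGen.refl

lemma anc_trans {a b c : V} (h1 : t.Anc a b) (h2 : t.Anc b c) : t.Anc a c :=
  Relation.ReflTransGen.trans h2 h1

lemma anc_antisymm (ht : t.IsDFS) {a b : V} (h1 : t.Anc a b) (h2 : t.Anc b a) : a = b :=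
  ht.pre_inj (le_antisymm (ht.pre_mono a b h1) (ht.pre_mono b a h2))

lemma anc_parent {b : V} (hb : b ≠ t.root) : t.Anc (t.parent b) b :=
  Relation.ReflTransGen.single ⟨hb, rfl⟩

lemma anc_strip {a b : V} (h : t.Anc a b) (hne : a ≠ b) :
    b ≠ t.root ∧ t.Anc a (t.parent b) := by
  rcases Relation.ReflTransGen.cases_head h with h' | ⟨c, ⟨hb, hc⟩, h'⟩
  · exact absurd h'.symm hne
  · subst hc; exact ⟨hb, h'⟩

lemma anc_comparable {a b x : V} (ha : t.Anc a x) (hb : t.Anc b x) :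
    t.Anc a b ∨ t.Anc b a := by
  induction ha with
  | refl => exact Or.inr hb
  | @tail c d h step ih =>
    obtain ⟨hc, rfl⟩ := step
    rcases ih with h' | h'
    · exact Or.inl (anc_trans (anc_parent hc) h')
    · by_cases hbc : b = c
      · subst hbc; exact Or.inl (anc_parent hc)
      · exact Or.inr (anc_strip h' hbc).2

end DFSTree

namespace DFSTree

variable {t : DFSTree V E}

lemma reach_closed {R : Set V} {S : Set E}
    (hR : ∀ f, f ∉ S → ((t.ends f).1 ∈ R ↔ (t.ends f).2 ∈ R))
    {a b : V} (h : Reach t.ends S a b) (ha : a ∈ R) : b ∈ R := by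
  induction h with
  | refl => exact ha
  | tail h step ih =>
    obtain ⟨e, heS, he | he⟩ := step
    · have h' := hR e heS; rw [he] at h'; exact h'.mp ih
    · have h' := hR e heS; rw [he] at h'; exact h'.mpr ih

lemma subtree_closed (ht : t.IsDFS) {u : V} {S : Set E}
    (hTS : t.treeEdge u ∈ S) (hBS : t.B u ⊆ S) :
    ∀ f, f ∉ S → ((t.ends f).1 ∈ {x | t.Anc u x} ↔ (t.ends f).2 ∈ {x | t.Anc u x}) := by
  intro f hf
  simp only [Set.mem_setOf_eq]
  by_cases hT : t.IsTreeEdge f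
  · obtain ⟨w, hw, rfl⟩ := hT
    rw [ht.tree_ends w hw]
    constructor
    · intro huw
      have hwu : u ≠ w := by rintro rfl; exact hf hTS
      exact (anc_strip huw hwu).2
    · intro hup
      exact anc_trans hup (anc_parent hw)
  · have hback := ht.back f hT
    constructor
    · intro hux
      rcases anc_comparable hux hback with h | h
      · exact h
      · by_cases hyu : (t.ends f).2 = u
        · rw [hyu]; exact anc_refl _
        · exact absurd (hBS ⟨hT, hux, h, hyu⟩) hf
    · intro huy
      exact anc_trans huy hback

lemma cut_lemma (ht : t.IsDFS) (h3 : GraphKConn t.ends 3) {u v : V} (S : Finset E)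
    (hcard : S.card < 3) (hTS : t.treeEdge u ∈ S) (hBS : t.B u ⊆ ↑S)
    (hanc : t.Anc v u) (hvne : v ≠ u) : False := by
  have hreach := h3 S hcard u v
  have hv : v ∈ {x | t.Anc u x} :=
    reach_closed (subtree_closed ht (Finset.mem_coe.mpr hTS) hBS) hreach (anc_refl u)
  exact hvne (anc_antisymm ht hanc hv)

lemma B_eq_comp (ht : t.IsDFS) (h3 : GraphKConn t.ends 3) {u u' : V}
    (hanc : t.Anc u u') (hne : u ≠ u') (hB : t.B u = t.B u') : False := by
  classical
  set S : Finset E := {t.treeEdge u, t.treeEdge u'} with hS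
  have hcard : S.card < 3 := by
    have : S.card ≤ 2 := (Finset.card_insert_le _ _).trans (by simp)
    omega
  set R : Set V := {x | t.Anc u x ∧ ¬ t.Anc u' x} with hR
  have hclosed : ∀ f, f ∉ (↑S : Set E) → ((t.ends f).1 ∈ R ↔ (t.ends f).2 ∈ R) := by
    intro f hf
    have hfS : f ∉ S := fun h => hf (Finset.mem_coe.mpr h)
    simp only [hR, Set.mem_setOf_eq]
    by_cases hT : t.IsTreeEdge f
    · obtain ⟨w, hw, rfl⟩ := hT
      rw [ht.tree_ends w hw]
      constructor
      · rintro ⟨h1, h2⟩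
        have hwu : u ≠ w := by
          rintro rfl; exact hfS (Finset.mem_insert_self _ _)
        exact ⟨(anc_strip h1 hwu).2, fun h => h2 (anc_trans h (anc_parent hw))⟩
      · rintro ⟨h1, h2⟩
        refine ⟨anc_trans h1 (anc_parent hw), fun h => ?_⟩
        by_cases hwu' : u' = w
        · subst hwu'
          exact hfS (Finset.mem_insert.mpr (Or.inr (Finset.mem_singleton_self _)))
        · exact h2 (anc_strip h hwu').2
    · have hback := ht.back f hT
      constructor
      · rintro ⟨h1, h2⟩
        have huy : t.Anc u (t.ends f).2 := by
          rcases anc_comparable h1 hback with h | h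
          · exact h
          · by_cases hyu : (t.ends f).2 = u
            · rw [hyu]; exact anc_refl _
            · have hfB : f ∈ t.B u' := by rw [← hB]; exact ⟨hT, h1, h, hyu⟩
              exact absurd hfB.2.1 h2
        exact ⟨huy, fun h => h2 (anc_trans h hback)⟩
      · rintro ⟨h1, h2⟩
        refine ⟨anc_trans h1 hback, fun h => ?_⟩
        rcases anc_comparable h hback with h' | h'
        · exact h2 h'
        · by_cases hyu : (t.ends f).2 = u'
          · exact h2 (by rw [hyu]; exact anc_refl _)
          · have hfB : f ∈ t.B u := by rw [hB]; exact ⟨hT, h, h', hyu⟩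
            exact hfB.2.2.2 (anc_antisymm ht hfB.2.2.1 h1)
  have hu : u ∈ R := ⟨anc_refl u, fun h => hne (anc_antisymm ht hanc h)⟩
  have := reach_closed hclosed (h3 S hcard u u') hu
  exact this.2 (anc_refl u')

end DFSTree


/-- Let `V(u)` be the set of ancestors `v` of `u` with `B(v) = B(u) ⊔ {e}` for
some back-edge `e`. Then `V(u)` and `V(u')` are disjoint for `u ≠ u'`. -/
theorem Vsets_disjoint (t : DFSTree V E) (ht : t.IsDFS)
    (h3 : GraphKConn t.ends 3) (u u' : V) (hne : u ≠ u') :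
    {v | t.Anc v u ∧ ∃ e, t.B v = insert e (t.B u) ∧ e ∉ t.B u} ∩
      {v | t.Anc v u' ∧ ∃ e, t.B v = insert e (t.B u') ∧ e ∉ t.B u'} = ∅ := by
  classical
  rw [Set.eq_empty_iff_forall_notMem]
  rintro v ⟨⟨hvu, e, hBv, heBu⟩, ⟨hvu', e', hBv', heBu'⟩⟩
  have hvne : v ≠ u := by
    rintro rfl
    exact heBu (by rw [hBv]; exact Set.mem_insert _ _)
  have hvne' : v ≠ u' := by
    rintro rfl
    exact heBu' (by rw [hBv']; exact Set.mem_insert _ _)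
  have heBv : e ∈ t.B v := by rw [hBv]; exact Set.mem_insert _ _
  have he'Bv : e' ∈ t.B v := by rw [hBv']; exact Set.mem_insert _ _
  by_cases hee : e = e'
  · subst hee
    -- B u = B u'
    have hBuu' : t.B u = t.B u' := by
      ext f
      constructor
      · intro hfu
        have hfv : f ∈ t.B v := by rw [hBv]; exact Set.mem_insert_of_mem _ hfu
        rw [hBv'] at hfv
        rcases Set.mem_insert_iff.mp hfv with rfl | h
        · exact absurd hfu heBu
        · exact h
      · intro hfu'
        have hfv : f ∈ t.B v := by rw [hBv']; exact Set.mem_insert_of_mem _ hfu'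
        rw [hBv] at hfv
        rcases Set.mem_insert_iff.mp hfv with rfl | h
        · exact absurd hfu' heBu'
        · exact h
    rcases Set.eq_empty_or_nonempty (t.B u) with hemp | ⟨f, hf⟩
    · exact DFSTree.cut_lemma ht h3 {t.treeEdge u} (by simp)
        (Finset.mem_singleton_self _) (by rw [hemp]; exact Set.empty_subset _) hvu hvne
    · have hf' : f ∈ t.B u' := hBuu' ▸ hf
      rcases DFSTree.anc_comparable hf.2.1 hf'.2.1 with h | h
      · exact DFSTree.B_eq_comp ht h3 h hne hBuu'
      · exact DFSTree.B_eq_comp ht h3 h (Ne.symm hne) hBuu'.symm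
  · -- e ≠ e'
    have heBu'mem : e ∈ t.B u' := by
      have hfv := heBv
      rw [hBv'] at hfv
      rcases Set.mem_insert_iff.mp hfv with h | h
      · exact absurd h hee
      · exact h
    have he'Bumem : e' ∈ t.B u := by
      have hfv := he'Bv
      rw [hBv] at hfv
      rcases Set.mem_insert_iff.mp hfv with h | h
      · exact absurd h.symm hee
      · exact h
    by_cases h1 : t.Anc u u'
    · refine heBu ⟨heBu'mem.1, DFSTree.anc_trans h1 heBu'mem.2.1,
        DFSTree.anc_trans heBv.2.2.1 hvu, fun hyu => ?_⟩
      exact hvne (DFSTree.anc_antisymm ht hvu (hyu ▸ heBv.2.2.1))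
    · by_cases h2 : t.Anc u' u
      · refine heBu' ⟨he'Bumem.1, DFSTree.anc_trans h2 he'Bumem.2.1,
          DFSTree.anc_trans he'Bv.2.2.1 hvu', fun hyu => ?_⟩
        exact hvne' (DFSTree.anc_antisymm ht hvu' (hyu ▸ he'Bv.2.2.1))
      · -- u, u' incomparable: B u ⊆ {treeEdge u, e'}
        have hsub : t.B u ⊆ ↑({t.treeEdge u, e'} : Finset E) := by
          intro f hf
          have hfv : f ∈ t.B v := by rw [hBv]; exact Set.mem_insert_of_mem _ hf
          rw [hBv'] at hfv
          rcases Set.mem_insert_iff.mp hfv with rfl | h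
          · simp
          · rcases DFSTree.anc_comparable hf.2.1 h.2.1 with h' | h'
            · exact absurd h' h1
            · exact absurd h' h2
        refine DFSTree.cut_lemma ht h3 {t.treeEdge u, e'} ?_
          (Finset.mem_insert_self _ _) hsub hvu hvne
        have : ({t.treeEdge u, e'} : Finset E).card ≤ 2 :=
          (Finset.card_insert_le _ _).trans (by simp)
        omega
end
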